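/- If K < 0 and H = 0 (isotropic second fundamental form), then for m > 0, v(2m) = (8/3) m³ K < 0, so the derivative dσ₋/dr = (K/3) b₋ r⁴/(√P(−b₋v + √P)) with b₋ = −1 diverges as r → 2m⁺; hence the ingoing phase coordinate is unbounded near the horizon. -/

import Mathlib

theorem isotropic_case_ingoing_phase_diverges (m K H : ℝ) (hm : 0 < m) (hK : K < 0)
    (hH : H = 0) :
    let v : ℝ → ℝ := fun r => K * r ^ 3 / 3 - H
    let P : ℝ → ℝ := fun r => (v r) ^ 2 + (1 - 2 * m / r) * r ^ 4
    let bminus : ℝ := -1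
    let g : ℝ → ℝ := fun r =>
      (K / 3) * bminus * r ^ 4 / (Real.sqrt (P r) * (-(bminus * v r) + Real.sqrt (P r)))
    v (2 * m) = (8 / 3) * m ^ 3 * K ∧ v (2 * m) < 0 ∧
      Filter.Tendsto (fun r => |g r|) (nhdsWithin (2 * m) (Set.Ioi (2 * m)))
        Filter.atTop := by
  intro v P bminus g
  have h2m : (0:ℝ) < 2 * m := by linarith
  have h2m' : (2*m : ℝ) ≠ 0 := ne_of_gt h2m
  have hveq : v (2*m) = (8/3) * m^3 * K := by simp only [v, hH]; ring
  have hvneg : v (2*m) < 0 := by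
    rw [hveq]; nlinarith [pow_pos hm 3]
  refine ⟨hveq, hvneg, ?_⟩
  set l := nhdsWithin (2*m) (Set.Ioi (2*m)) with hl
  -- continuity of v and P at 2m
  have hvc : ContinuousAt v (2*m) := by unfold v; fun_prop
  have hPc : ContinuousAt P (2*m) := by
    unfold P
    apply ContinuousAt.add
    · fun_prop
    · exact ContinuousAt.mul
        (ContinuousAt.sub continuousAt_const
          (ContinuousAt.div continuousAt_const continuousAt_id h2m'))
        (by fun_prop)
  have hP2m : P (2*m) = (v (2*m))^2 := by
    simp only [P]
    have : 1 - 2 * m / (2*m) = 0 := by field_simp; ring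
    rw [this]; ring
  have hsq2m : Real.sqrt (P (2*m)) = -(v (2*m)) := by
    rw [hP2m, Real.sqrt_sq_eq_abs, abs_of_neg hvneg]
  -- eventual facts for r > 2m
  have hrmem : ∀ᶠ r in l, r ∈ Set.Ioi (2*m) := self_mem_nhdsWithin
  have hPgt : ∀ r ∈ Set.Ioi (2*m), (v r)^2 < P r := by
    intro r hr
    simp only [Set.mem_Ioi] at hr
    have hrpos : 0 < r := lt_trans h2m hr
    have : 0 < (1 - 2*m/r) * r^4 := by
      apply mul_pos
      · have : 2*m/r < 1 := (div_lt_one hrpos).mpr hr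
        linarith
      · positivity
    simp only [P]; linarith
  have hDpos : ∀ r ∈ Set.Ioi (2*m),
      0 < Real.sqrt (P r) * (-(bminus * v r) + Real.sqrt (P r)) := by
    intro r hr
    have h1 : |v r| < Real.sqrt (P r) := by
      have := hPgt r hr
      calc |v r| = Real.sqrt ((v r)^2) := (Real.sqrt_sq_eq_abs _).symm
        _ < Real.sqrt (P r) := Real.sqrt_lt_sqrt (sq_nonneg _) this
    have h2 : 0 < Real.sqrt (P r) := lt_of_le_of_lt (abs_nonneg _) h1
    apply mul_pos h2
    have h3 : -(Real.sqrt (P r)) < v r := by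
      have := neg_abs_le (v r); linarith
    simp only [bminus]
    nlinarith
  -- denominator tends to 0 within Ioi 0
  have hDlim : Filter.Tendsto
      (fun r => Real.sqrt (P r) * (-(bminus * v r) + Real.sqrt (P r))) l
      (nhdsWithin 0 (Set.Ioi 0)) := by
    rw [tendsto_nhdsWithin_iff]
    constructor
    · have hsqc : Filter.Tendsto (fun r => Real.sqrt (P r)) l (nhds (Real.sqrt (P (2*m)))) :=
        ((Real.continuous_sqrt.continuousAt.comp hPc).tendsto).mono_left nhdsWithin_le_nhds
      have hvlim : Filter.Tendsto v l (nhds (v (2*m))) :=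
        hvc.tendsto.mono_left nhdsWithin_le_nhds
      have := hsqc.mul ((hvlim.const_mul bminus).neg.add hsqc)
      rw [hsq2m] at this
      convert this using 2
      simp only [bminus]; ring
    · exact hrmem.mono (fun r hr => hDpos r hr)
  have hinv : Filter.Tendsto
      (fun r => (Real.sqrt (P r) * (-(bminus * v r) + Real.sqrt (P r)))⁻¹) l
      Filter.atTop := hDlim.inv_tendsto_nhdsGT_zero
  -- numerator tends to a positive constant
  have hNlim : Filter.Tendsto (fun r => (K/3) * bminus * r^4) l
      (nhds ((K/3) * bminus * (2*m)^4)) := by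
    apply Filter.Tendsto.mono_left _ nhdsWithin_le_nhds
    exact (ContinuousAt.tendsto (by fun_prop))
  have hNpos : 0 < (K/3) * bminus * (2*m)^4 := by
    simp only [bminus]
    nlinarith [pow_pos h2m 4]
  have hg : Filter.Tendsto g l Filter.atTop := by
    have := Filter.Tendsto.pos_mul_atTop hNpos hNlim hinv
    apply this.congr
    intro r
    simp only [g, div_eq_mul_inv]
  exact Filter.tendsto_atTop_mono (fun r => le_abs_self (g r)) hg
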